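/- Let d ≥ 1 and q ∈ (1,∞) with q' = q/(q−1), and let g : ℝ^d × ℝ^d → ℝ^d satisfy conditions (g1)–(g4) with exponent q. Then there exist constants c̃₁, c̃₂ > 0, independent of ε, such that for every ε ∈ (0,1) and every (s,v) ∈ ℝ^d × ℝ^d with gε(s,v) = 0 one has s · v ≥ c̃₁(|s|^{min{2,q'}} + |v|^{min{2,q}}) − c̃₂. -/

import Mathlib

lemma myrpow_le_rpow_add_one {x p r : ℝ} (hx : 0 ≤ x) (hp : 0 ≤ p) (hpr : p ≤ r) :
    x ^ p ≤ x ^ r + 1 := by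
  rcases le_total x 1 with h | h
  · have h1 := Real.rpow_le_one hx h hp
    have h2 := Real.rpow_nonneg hx r
    linarith
  · have := Real.rpow_le_rpow_of_exponent_le h hpr
    linarith

lemma myrpow_le_self_add_one {x θ : ℝ} (hx : 0 ≤ x) (h0 : 0 ≤ θ) (h1 : θ ≤ 1) :
    x ^ θ ≤ x + 1 := by
  have h := myrpow_le_rpow_add_one hx h0 h1
  rwa [Real.rpow_one] at h

lemma myadd_rpow_le4 {x y p : ℝ} (hx : 0 ≤ x) (hy : 0 ≤ y) (hp : 0 ≤ p) (hp2 : p ≤ 2) :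
    (x + y) ^ p ≤ 4 * (x ^ p + y ^ p) := by
  have hxy : x + y ≤ 2 * max x y := by
    rcases le_total x y with h | h
    · rw [max_eq_right h]; linarith
    · rw [max_eq_left h]; linarith
  have hmax : 0 ≤ max x y := le_max_of_le_left hx
  have h2p : (2:ℝ) ^ p ≤ 4 := by
    have := Real.rpow_le_rpow_of_exponent_le (by norm_num : (1:ℝ) ≤ 2) hp2
    have h4 : (2:ℝ) ^ (2:ℝ) = 4 := by
      rw [show (2:ℝ) = ((2:ℕ):ℝ) by norm_num, Real.rpow_natCast]; norm_num
    linarith [h4 ▸ this]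
  have hmaxp : (max x y) ^ p ≤ x ^ p + y ^ p := by
    rcases le_total x y with h | h
    · rw [max_eq_right h]; have := Real.rpow_nonneg hx p; linarith
    · rw [max_eq_left h]; have := Real.rpow_nonneg hy p; linarith
  calc (x + y) ^ p ≤ (2 * max x y) ^ p := Real.rpow_le_rpow (by linarith) hxy hp
    _ = 2 ^ p * (max x y) ^ p := Real.mul_rpow (by norm_num) hmax
    _ ≤ 4 * (x ^ p + y ^ p) := by
        have h1 := Real.rpow_nonneg hmax p
        have h2 : (0:ℝ) ≤ 2 ^ p := Real.rpow_nonneg (by norm_num) p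
        nlinarith [hmaxp]

lemma myeps_rpow {ε V p : ℝ} (hε0 : 0 < ε) (hε1 : ε ≤ 1) (hV : 0 ≤ V)
    (hp0 : 0 ≤ p) (hp2 : p ≤ 2) : (ε * V) ^ p ≤ ε * V ^ 2 + 1 := by
  have e1 : (ε * V) ^ p = ε ^ p * V ^ p := Real.mul_rpow hε0.le hV
  have e2 : ε ^ p ≤ ε ^ (p / 2) := Real.rpow_le_rpow_of_exponent_ge hε0 hε1 (by linarith)
  have e3 : ε ^ (p / 2) * V ^ p = (ε * V ^ 2) ^ (p / 2) := by
    rw [Real.mul_rpow hε0.le (by positivity), ← Real.rpow_natCast V 2,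
      ← Real.rpow_mul hV, show ((2:ℕ):ℝ) * (p / 2) = p by push_cast; ring]
  have e4 : (ε * V ^ 2) ^ (p / 2) ≤ ε * V ^ 2 + 1 :=
    myrpow_le_self_add_one (by positivity) (by linarith) (by linarith)
  have hVp : 0 ≤ V ^ p := Real.rpow_nonneg hV p
  calc (ε * V) ^ p = ε ^ p * V ^ p := e1
    _ ≤ ε ^ (p / 2) * V ^ p := mul_le_mul_of_nonneg_right e2 hVp
    _ = (ε * V ^ 2) ^ (p / 2) := e3
    _ ≤ ε * V ^ 2 + 1 := e4

noncomputable section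
open MeasureTheory Filter Topology

/-- `ℝ^d` with the Euclidean inner product. -/
abbrev Vec (d : ℕ) : Type := EuclideanSpace ℝ (Fin d)

/-- The Euclidean inner product `s · v`. -/
def dotp {d : ℕ} (s v : Vec d) : ℝ := inner ℝ s v

/-- The partial derivative `∂_s g(s,v)` as a continuous linear map. -/
def partials {d : ℕ} (g : Vec d × Vec d → Vec d) (p : Vec d × Vec d) :
    Vec d →L[ℝ] Vec d :=
  (fderiv ℝ g p).comp (ContinuousLinearMap.inl ℝ (Vec d) (Vec d))

/-- The partial derivative `∂_v g(s,v)` as a continuous linear map. -/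
def partialv {d : ℕ} (g : Vec d × Vec d → Vec d) (p : Vec d × Vec d) :
    Vec d →L[ℝ] Vec d :=
  (fderiv ℝ g p).comp (ContinuousLinearMap.inr ℝ (Vec d) (Vec d))

/-- (g1): `g` is Lipschitz continuous with `g(0,0) = 0`. -/
def Condg1 {d : ℕ} (g : Vec d × Vec d → Vec d) : Prop :=
  (∃ K : NNReal, LipschitzWith K g) ∧ g (0, 0) = 0

/-- (g2): a.e. differentiability together with the sign conditions on the partial
derivatives. -/
def Condg2 {d : ℕ} (g : Vec d × Vec d → Vec d) : Prop :=
  ∀ᵐ p ∂(volume : Measure (Vec d × Vec d)),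
    DifferentiableAt ℝ g p ∧
    (∀ x : Vec d, 0 ≤ dotp (partials g p x) x) ∧
    (∀ x : Vec d, dotp (partialv g p x) x ≤ 0) ∧
    (∀ x : Vec d, x ≠ 0 → 0 < dotp (partials g p x - partialv g p x) x) ∧
    (∀ x : Vec d,
      dotp (partialv g p (ContinuousLinearMap.adjoint (partials g p) x)) x ≤ 0)

/-- (g3): either coercivity in `s` or anti-coercivity in `v` at infinity. -/
def Condg3 {d : ℕ} (g : Vec d × Vec d → Vec d) : Prop :=
  (∀ v : Vec d, 0 < liminf (fun s : Vec d => dotp (g (s, v)) s) (comap norm atTop)) ∨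
  (∀ s : Vec d, limsup (fun v : Vec d => dotp (g (s, v)) v) (comap norm atTop) < 0)

/-- (g4) with exponent `q`: `(q, q')`-coercivity on the null points of `g`. -/
def Condg4 {d : ℕ} (q : ℝ) (g : Vec d × Vec d → Vec d) : Prop :=
  ∃ c₁ c₂ : ℝ, 0 < c₁ ∧ 0 < c₂ ∧ ∀ s v : Vec d, g (s, v) = 0 →
    c₁ * (‖s‖ ^ (q / (q - 1)) + ‖v‖ ^ q) - c₂ ≤ dotp s v

/-- The `ε`-approximation `gε(s,v) := g(s − εv, v − εs)`. -/
def geps {d : ℕ} (g : Vec d × Vec d → Vec d) (ε : ℝ) : Vec d × Vec d → Vec d :=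
  fun p => g (p.1 - ε • p.2, p.2 - ε • p.1)

/-- uniform (`ε`-independent) coercivity of the null points of the
`ε`-approximations `gε`. -/
theorem geps_uniform_coercivity {d : ℕ} (hd : 1 ≤ d) (q : ℝ) (hq : 1 < q)
    (g : Vec d × Vec d → Vec d)
    (hg1 : Condg1 g) (hg2 : Condg2 g) (hg3 : Condg3 g) (hg4 : Condg4 q g) :
    ∃ c₁ c₂ : ℝ, 0 < c₁ ∧ 0 < c₂ ∧
      ∀ ε ∈ Set.Ioo (0 : ℝ) 1, ∀ s v : Vec d, geps g ε (s, v) = 0 →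
        c₁ * (‖s‖ ^ min 2 (q / (q - 1)) + ‖v‖ ^ min 2 q) - c₂ ≤ dotp s v := by

  obtain ⟨c₁, c₂, hc₁, hc₂, hg4⟩ := hg4
  have hm0 : 0 < min c₁ 1 := lt_min hc₁ one_pos
  set m := min c₁ 1 with hm
  have hm1 : m ≤ c₁ := min_le_left _ _
  have hm2 : m ≤ 1 := min_le_right _ _
  refine ⟨m / 8, 4 * m + c₂, by positivity, by positivity, ?_⟩
  rintro ε ⟨hε0, hε1⟩ s v hzero
  have hq0 : (0:ℝ) < q - 1 := by linarith
  have hq' : 0 < q / (q - 1) := div_pos (by linarith) hq0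
  have hp10 : 0 ≤ min 2 (q / (q - 1)) := le_min (by norm_num) hq'.le
  have hp12 : min 2 (q / (q - 1)) ≤ 2 := min_le_left _ _
  have hp1q : min 2 (q / (q - 1)) ≤ q / (q - 1) := min_le_right _ _
  have hp20 : 0 ≤ min 2 q := le_min (by norm_num) (by linarith)
  have hp22 : min 2 q ≤ 2 := min_le_left _ _
  have hp2q : min 2 q ≤ q := min_le_right _ _
  have h4 := hg4 (s - ε • v) (v - ε • s) hzero
  -- abbreviations
  set a : Vec d := s - ε • v with ha
  set b : Vec d := v - ε • s with hb
  -- key inner-product identity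
  have hid : dotp a b = (1 + ε * ε) * dotp s v - ε * (‖s‖ ^ 2 + ‖v‖ ^ 2) := by
    simp only [dotp, ha, hb, inner_sub_left, inner_sub_right, real_inner_smul_left,
      real_inner_smul_right, real_inner_self_eq_norm_sq, real_inner_comm v s]
    ring
  -- norm bounds
  have hS : ‖s‖ ≤ ‖a‖ + ε * ‖v‖ := by
    calc ‖s‖ = ‖a + ε • v‖ := by rw [ha]; congr 1; abel
      _ ≤ ‖a‖ + ‖ε • v‖ := norm_add_le _ _
      _ = ‖a‖ + ε * ‖v‖ := by rw [norm_smul, Real.norm_of_nonneg hε0.le]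
  have hV : ‖v‖ ≤ ‖b‖ + ε * ‖s‖ := by
    calc ‖v‖ = ‖b + ε • s‖ := by rw [hb]; congr 1; abel
      _ ≤ ‖b‖ + ‖ε • s‖ := norm_add_le _ _
      _ = ‖b‖ + ε * ‖s‖ := by rw [norm_smul, Real.norm_of_nonneg hε0.le]
  -- rpow bounds
  have hSb : ‖s‖ ^ min 2 (q / (q - 1)) ≤ 4 * ‖a‖ ^ (q / (q - 1)) + 4 * (ε * ‖v‖ ^ 2) + 8 := by
    have h1 : ‖s‖ ^ min 2 (q / (q - 1)) ≤ (‖a‖ + ε * ‖v‖) ^ min 2 (q / (q - 1)) :=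
      Real.rpow_le_rpow (norm_nonneg s) hS hp10
    have h2 : (‖a‖ + ε * ‖v‖) ^ min 2 (q / (q - 1)) ≤
        4 * (‖a‖ ^ min 2 (q / (q - 1)) + (ε * ‖v‖) ^ min 2 (q / (q - 1))) :=
      myadd_rpow_le4 (norm_nonneg a) (by positivity) hp10 hp12
    have h3 : ‖a‖ ^ min 2 (q / (q - 1)) ≤ ‖a‖ ^ (q / (q - 1)) + 1 :=
      myrpow_le_rpow_add_one (norm_nonneg a) hp10 hp1q
    have h4' : (ε * ‖v‖) ^ min 2 (q / (q - 1)) ≤ ε * ‖v‖ ^ 2 + 1 :=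
      myeps_rpow hε0 hε1.le (norm_nonneg v) hp10 hp12
    linarith
  have hVb : ‖v‖ ^ min 2 q ≤ 4 * ‖b‖ ^ q + 4 * (ε * ‖s‖ ^ 2) + 8 := by
    have h1 : ‖v‖ ^ min 2 q ≤ (‖b‖ + ε * ‖s‖) ^ min 2 q :=
      Real.rpow_le_rpow (norm_nonneg v) hV hp20
    have h2 : (‖b‖ + ε * ‖s‖) ^ min 2 q ≤
        4 * (‖b‖ ^ min 2 q + (ε * ‖s‖) ^ min 2 q) :=
      myadd_rpow_le4 (norm_nonneg b) (by positivity) hp20 hp22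
    have h3 : ‖b‖ ^ min 2 q ≤ ‖b‖ ^ q + 1 :=
      myrpow_le_rpow_add_one (norm_nonneg b) hp20 hp2q
    have h4' : (ε * ‖s‖) ^ min 2 q ≤ ε * ‖s‖ ^ 2 + 1 :=
      myeps_rpow hε0 hε1.le (norm_nonneg s) hp20 hp22
    linarith
  -- generalize rpow terms to opaque reals
  set AQ : ℝ := ‖a‖ ^ (q / (q - 1)) with hAQ
  set BQ : ℝ := ‖b‖ ^ q with hBQ
  set SP : ℝ := ‖s‖ ^ min 2 (q / (q - 1)) with hSP
  set VP : ℝ := ‖v‖ ^ min 2 q with hVP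
  set S2 : ℝ := ‖s‖ ^ 2 with hS2
  set V2 : ℝ := ‖v‖ ^ 2 with hV2
  have hA0 : 0 ≤ AQ := Real.rpow_nonneg (norm_nonneg a) _
  have hB0 : 0 ≤ BQ := Real.rpow_nonneg (norm_nonneg b) _
  have hS20 : 0 ≤ ε * S2 := by rw [hS2]; positivity
  have hV20 : 0 ≤ ε * V2 := by rw [hV2]; positivity
  have hSp0 : 0 ≤ SP := Real.rpow_nonneg (norm_nonneg s) _
  have hVp0 : 0 ≤ VP := Real.rpow_nonneg (norm_nonneg v) _
  clear_value AQ BQ SP VP S2 V2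
  -- main estimate
  set t := dotp s v with ht
  have hkey : c₁ * (AQ + BQ) - c₂ + ε * (S2 + V2) ≤ (1 + ε * ε) * t := by
    linarith [hid, h4]
  have hsum : SP + VP ≤ 4 * (AQ + BQ + ε * S2 + ε * V2) + 16 := by linarith
  have hmsum : m * (SP + VP) ≤ m * (4 * (AQ + BQ + ε * S2 + ε * V2) + 16) :=
    mul_le_mul_of_nonneg_left hsum hm0.le
  have hw1 : m * (AQ + BQ) ≤ c₁ * (AQ + BQ) :=
    mul_le_mul_of_nonneg_right hm1 (add_nonneg hA0 hB0)
  have hw2 : m * (ε * S2 + ε * V2) ≤ 1 * (ε * S2 + ε * V2) :=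
    mul_le_mul_of_nonneg_right hm2 (add_nonneg hS20 hV20)
  have hYlow : m / 4 * (SP + VP) - 4 * m ≤ c₁ * (AQ + BQ) + ε * (S2 + V2) := by
    linarith only [hmsum, hw1, hw2]
  rcases le_or_gt 0 t with htpos | htneg
  · have hee : 0 ≤ (1 - ε * ε) * t :=
      mul_nonneg (by nlinarith only [hε0, hε1]) htpos
    linarith only [hkey, hYlow, hee, hm0, hc₂]
  · have hee : ε * ε * t ≤ 0 :=
      mul_nonpos_of_nonneg_of_nonpos (by positivity) htneg.le
    have hhalf : m / 8 * (SP + VP) ≤ m / 4 * (SP + VP) :=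
      mul_le_mul_of_nonneg_right (by linarith only [hm0]) (by linarith only [hSp0, hVp0])
    linarith only [hkey, hYlow, hee, hhalf]
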